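/- A positive progressively measurable process η (with η_t and η_t/η_s integrable for all 0≤s≤t<T) has uncorrelated multiplicative increments if and only if the normalized process M_t = η_t/E[η_t], t∈[0,T), is a martingale with respect to (F_t). -/

import Mathlib

open MeasureTheory Set
open scoped ENNReal

private lemma integral_pos_of_pos {Ω : Type*} {m0 : MeasurableSpace Ω} (P : Measure Ω)
    [IsProbabilityMeasure P] {f : Ω → ℝ} (hf : ∀ ω, 0 < f ω) (hfi : Integrable f P) :
    0 < ∫ ω, f ω ∂P := by
  rw [integral_pos_iff_support_of_nonneg (fun ω => (hf ω).le) hfi]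
  have : Function.support f = Set.univ := by
    ext ω; simp [Function.support, (hf ω).ne']
  rw [this]
  simp

/-- a positive progressively measurable process `η` (with `η_t` and `η_t/η_s`
integrable for `0 ≤ s ≤ t < T`) has uncorrelated multiplicative increments, i.e.
`E[η_t/η_s | F_s] = E[η_t/η_s]` a.s. for all `0 ≤ s ≤ t < T`, if and only if the normalized
process `M_t = η_t / E[η_t]`, `t ∈ [0,T)`, is a martingale with respect to `(F_t)`
(adapted, integrable, with the martingale property). -/
theorem uncorrelated_multiplicative_increments_iff_normalized_martingale
    {Ω : Type*} {m0 : MeasurableSpace Ω} (P : Measure Ω) [IsProbabilityMeasure P]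
    (ℱ : Filtration ℝ m0) (T : ℝ) (hT : 0 < T)
    (η : ℝ → Ω → ℝ) (hηprog : ProgMeasurable ℱ η)
    (hpos : ∀ t ω, 0 < η t ω)
    (hint : ∀ t, 0 ≤ t → t < T → Integrable (η t) P)
    (hratio : ∀ s t, 0 ≤ s → s ≤ t → t < T → Integrable (fun ω => η t ω / η s ω) P) :
    (∀ s t, 0 ≤ s → s ≤ t → t < T →
        P[fun ω => η t ω / η s ω | ℱ s] =ᵐ[P] fun _ => ∫ ω, η t ω / η s ω ∂P)
      ↔
    ((∀ t, 0 ≤ t → t < T → Integrable (fun ω => η t ω / ∫ ω', η t ω' ∂P) P) ∧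
     (∀ t, 0 ≤ t → t < T → StronglyMeasurable[ℱ t] (fun ω => η t ω / ∫ ω', η t ω' ∂P)) ∧
     (∀ s t, 0 ≤ s → s ≤ t → t < T →
        P[fun ω => η t ω / ∫ ω', η t ω' ∂P | ℱ s]
          =ᵐ[P] fun ω => η s ω / ∫ ω', η s ω' ∂P)) := by
  have hcpos : ∀ t, 0 ≤ t → t < T → 0 < ∫ ω, η t ω ∂P := fun t ht ht' =>
    integral_pos_of_pos P (fun ω => hpos t ω) (hint t ht ht')
  constructor
  · -- forward direction
    intro h
    refine ⟨fun t ht ht' => (hint t ht ht').div_const _,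
      fun t ht ht' => by
        simpa [div_eq_mul_inv] using (IsStronglyProgressive.stronglyAdapted hηprog t).mul_const (∫ ω', η t ω' ∂P)⁻¹, ?_⟩
    intro s t hs hst ht'
    have hs' : s < T := lt_of_le_of_lt hst ht'
    have ht : 0 ≤ t := hs.trans hst
    set cs := ∫ ω, η s ω ∂P with hcs
    set ct := ∫ ω, η t ω ∂P with hct
    set r := ∫ ω, η t ω / η s ω ∂P with hr
    have hcs0 : 0 < cs := hcpos s hs hs'
    have hct0 : 0 < ct := hcpos t ht ht'
    have hr0 : 0 < r := integral_pos_of_pos P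
      (fun ω => div_pos (hpos t ω) (hpos s ω)) (hratio s t hs hst ht')
    have hηs_meas : StronglyMeasurable[ℱ s] (η s) := IsStronglyProgressive.stronglyAdapted hηprog s
    have hmul : (η s * fun ω => η t ω / η s ω) = η t := by
      funext ω
      simp only [Pi.mul_apply]
      field_simp [(hpos s ω).ne']
    -- key : P[η t | ℱ s] =ᵐ[P] fun ω => η s ω * r
    have key : P[η t | ℱ s] =ᵐ[P] fun ω => η s ω * r := by
      have h1 := condExp_mul_of_stronglyMeasurable_left (μ := P) hηs_meas
        (by rw [hmul]; exact hint t ht ht') (hratio s t hs hst ht')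
      rw [hmul] at h1
      refine h1.trans ?_
      filter_upwards [h s t hs hst ht'] with ω hω
      simp only [Pi.mul_apply, hω]
      rfl
    -- ct = r * cs
    have hct_eq : ct = r * cs := by
      have h2 : ∫ ω, (P[η t | ℱ s]) ω ∂P = ∫ ω, η t ω ∂P :=
        integral_condExp (ℱ.le s) (f := η t)
      have h3 : ∫ ω, (P[η t | ℱ s]) ω ∂P = ∫ ω, η s ω * r ∂P :=
        integral_congr_ae key
      rw [h2] at h3
      rw [← hct] at h3
      rw [h3, integral_mul_const, mul_comm]
    -- conclude
    have hdiv : (fun ω => η t ω / ct) = ct⁻¹ • η t := by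
      funext ω
      simp [div_eq_inv_mul, smul_eq_mul]
    rw [hdiv]
    refine (condExp_smul (μ := P) (m := ℱ s) ct⁻¹ (η t)).trans ?_
    filter_upwards [key] with ω hω
    simp only [Pi.smul_apply, smul_eq_mul, hω]
    rw [hct_eq]
    field_simp [hr0.ne', hcs0.ne']
  · -- backward direction
    rintro ⟨hMint, hMmeas, hMmart⟩ s t hs hst ht'
    have hs' : s < T := lt_of_le_of_lt hst ht'
    have ht : 0 ≤ t := hs.trans hst
    set cs := ∫ ω, η s ω ∂P with hcs
    set ct := ∫ ω, η t ω ∂P with hct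
    have hcs0 : 0 < cs := hcpos s hs hs'
    have hct0 : 0 < ct := hcpos t ht ht'
    -- key2 : P[η t | ℱ s] =ᵐ[P] fun ω => ct * (η s ω / cs)
    have key2 : P[η t | ℱ s] =ᵐ[P] fun ω => ct * (η s ω / cs) := by
      have heq : η t = ct • fun ω => η t ω / ct := by
        funext ω
        simp only [Pi.smul_apply, smul_eq_mul]
        field_simp
      calc P[η t | ℱ s] = P[ct • fun ω => η t ω / ct | ℱ s] := by rw [← heq]
        _ =ᵐ[P] ct • P[fun ω => η t ω / ct | ℱ s] := condExp_smul ct _ _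
        _ =ᵐ[P] fun ω => ct * (η s ω / cs) := by
            filter_upwards [hMmart s t hs hst ht'] with ω hω
            simp only [Pi.smul_apply, smul_eq_mul, hω]
            exact congrArg (ct * ·) hω
    -- pull-out: P[(η s)⁻¹ * η t | ℱ s] =ᵐ (η s)⁻¹ * P[η t | ℱ s]
    have hinv_meas : StronglyMeasurable[ℱ s] (fun ω => (η s ω)⁻¹) :=
      ((IsStronglyProgressive.stronglyAdapted hηprog s).measurable.inv).stronglyMeasurable
    have hmul : ((fun ω => (η s ω)⁻¹) * η t) = fun ω => η t ω / η s ω := by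
      funext ω
      simp only [Pi.mul_apply]
      rw [inv_mul_eq_div]
    have hpull := condExp_mul_of_stronglyMeasurable_left (μ := P) hinv_meas
      (by rw [hmul]; exact hratio s t hs hst ht') (hint t ht ht')
    rw [hmul] at hpull
    have hfinal : P[fun ω => η t ω / η s ω | ℱ s] =ᵐ[P] fun _ => ct / cs := by
      refine hpull.trans ?_
      filter_upwards [key2] with ω hω
      simp only [Pi.mul_apply, hω]
      field_simp [(hpos s ω).ne']
    have hrval : ∫ ω, η t ω / η s ω ∂P = ct / cs := by
      have h2 : ∫ ω, (P[fun ω => η t ω / η s ω | ℱ s]) ω ∂P = ∫ ω, η t ω / η s ω ∂P :=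
        integral_condExp (ℱ.le s) (f := fun ω => η t ω / η s ω)
      have h3 : ∫ ω, (P[fun ω => η t ω / η s ω | ℱ s]) ω ∂P = ∫ _ω, ct / cs ∂P :=
        integral_congr_ae hfinal
      rw [h2] at h3
      simpa using h3
    rw [hrval]
    exact hfinal
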